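/- arXiv:1207.0242 — 3 statements merged into one kernel-verified Lean document; each statement's English description precedes it below -/
import Mathlib

section
/- If Σ is a q×q real symmetric positive definite matrix all of whose diagonal entries equal one (a positive definite correlation matrix), then every diagonal entry of its inverse Σ^{-1} is greater than or equal to 1. -/
open Matrix

/-- Diagonal of an inverted correlation matrix (Lemma 2): if `S` is a positive
definite correlation matrix (symmetric positive definite with unit diagonal),
then every diagonal entry of `S⁻¹` is at least `1`. -/
theorem stmt1 {q : ℕ} (S : Matrix (Fin q) (Fin q) ℝ) (hS : S.PosDef)
    (hdiag : ∀ i, S i i = 1) : ∀ i, 1 ≤ S⁻¹ i i := by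
  intro i
  have hdet : IsUnit S.det := isUnit_iff_ne_zero.mpr hS.det_pos.ne'
  have hinv : S * S⁻¹ = 1 := Matrix.mul_nonsing_inv S hdet
  have hinv' : S⁻¹ * S = 1 := Matrix.nonsing_inv_mul S hdet
  have hH : S⁻¹.IsHermitian := hS.isHermitian.inv
  set A : Matrix (Fin q) (Fin q) ℝ := 1 - S⁻¹ with hA
  have hpsd : (Aᴴ * S * A).PosSemidef := hS.posSemidef.conjTranspose_mul_mul_same A
  have hAH : Aᴴ = A := by
    rw [hA, conjTranspose_sub, conjTranspose_one, hH]
  have hprod : Aᴴ * S * A = S - 1 - 1 + S⁻¹ := by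
    rw [hAH, hA]
    rw [sub_mul, sub_mul, mul_sub, one_mul, hinv', hinv]
    noncomm_ring
  have h0 : 0 ≤ (Aᴴ * S * A) i i := by
    exact hpsd.diag_nonneg
  rw [hprod] at h0
  have h1 : (S - 1 - 1 + S⁻¹) i i = S i i - 1 - 1 + S⁻¹ i i := by
    simp [Matrix.sub_apply, Matrix.add_apply, Matrix.one_apply]
  rw [h1, hdiag i] at h0
  linarith
end

section
/- Let A = (a_{ij}) and B = (b_{ij}) be real symmetric 2×2 matrices. If A is positive definite with a_{11} ≥ 1 and a_{22} ≥ 1, and ‖A − B‖_∞ < δ for some δ with 0 < δ < 1, then |a_{12}/√(a_{11} a_{22}) − b_{12}/√(b_{11} b_{22})| < 2δ/(1−δ). -/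
open Matrix

/-- Entrywise maximum norm of a square real matrix. -/
noncomputable def supNorm {q : ℕ} (A : Matrix (Fin q) (Fin q) ℝ) : ℝ :=
  ⨆ i, ⨆ j, |A i j|

lemma entry_le_supNorm {q : ℕ} (M : Matrix (Fin q) (Fin q) ℝ) (i j : Fin q) :
    |M i j| ≤ supNorm M := by
  have h1 : |M i j| ≤ ⨆ j, |M i j| :=
    le_ciSup (f := fun j => |M i j|) (Set.Finite.bddAbove (Set.finite_range _)) j
  have h2 : (⨆ j, |M i j|) ≤ (⨆ i, ⨆ j, |M i j|) :=
    le_ciSup (f := fun i => ⨆ j, |M i j|) (Set.Finite.bddAbove (Set.finite_range _)) i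
  exact h1.trans h2

set_option maxHeartbeats 1000000 in
/-- Error in partial correlations (Lemma 3): if `A`, `B` are symmetric `2 × 2`
matrices, `A` positive definite with `a₁₁, a₂₂ ≥ 1`, and `‖A - B‖_∞ < δ < 1`, then
`|a₁₂/√(a₁₁a₂₂) - b₁₂/√(b₁₁b₂₂)| < 2δ/(1-δ)`. -/
theorem stmt2 (A B : Matrix (Fin 2) (Fin 2) ℝ) (hA : A.PosDef) (hAsymm : A.IsSymm)
    (hBsymm : B.IsSymm) (h11 : 1 ≤ A 0 0) (h22 : 1 ≤ A 1 1)
    (δ : ℝ) (hδ0 : 0 < δ) (hδ1 : δ < 1) (hAB : supNorm (A - B) < δ) :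
    |A 0 1 / Real.sqrt (A 0 0 * A 1 1) - B 0 1 / Real.sqrt (B 0 0 * B 1 1)| <
      2 * δ / (1 - δ) := by
  set a := A 0 0 with ha'
  set d := A 1 1 with hd'
  set c := A 0 1 with hc'
  set b1 := B 0 0
  set b2 := B 1 1
  set e := B 0 1
  have hab1 : |a - b1| < δ := lt_of_le_of_lt (by simpa using entry_le_supNorm (A - B) 0 0) hAB
  have hdb2 : |d - b2| < δ := lt_of_le_of_lt (by simpa using entry_le_supNorm (A - B) 1 1) hAB
  have hce : |c - e| < δ := lt_of_le_of_lt (by simpa using entry_le_supNorm (A - B) 0 1) hAB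
  rw [abs_lt] at hab1 hdb2
  have hdet : 0 < a * d - c * c := by
    have h := hA.det_pos
    rw [Matrix.det_fin_two] at h
    have hsym : A 1 0 = A 0 1 := by
      have := congrFun (congrFun hAsymm 0) 1
      simpa [Matrix.transpose_apply] using this
    rw [hsym] at h
    linarith
  have had1 : (1:ℝ) ≤ a * d := by nlinarith
  set s := Real.sqrt (a * d) with hs'
  set t := Real.sqrt (b1 * b2) with ht'
  have hs1 : 1 ≤ s := Real.one_le_sqrt.mpr had1
  have hs0 : 0 < s := lt_of_lt_of_le one_pos hs1
  have hss : s * s = a * d := Real.mul_self_sqrt (by nlinarith)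
  have hcs : |c| < s := by
    rw [← Real.sqrt_sq_eq_abs]
    exact Real.sqrt_lt_sqrt (sq_nonneg c) (by nlinarith)
  have ha0 : (0:ℝ) < a := by linarith
  have hd0 : (0:ℝ) < d := by linarith
  have hb1l : a * (1 - δ) < b1 := by nlinarith
  have hb1u : b1 < a * (1 + δ) := by nlinarith
  have hb2l : d * (1 - δ) < b2 := by nlinarith
  have hb2u : b2 < d * (1 + δ) := by nlinarith
  have hp1 : a * (1 - δ) * (d * (1 - δ)) < b1 * b2 :=
    mul_lt_mul hb1l hb2l.le (by nlinarith) (by nlinarith)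
  have hp2 : b1 * b2 < a * (1 + δ) * (d * (1 + δ)) :=
    mul_lt_mul hb1u hb2u.le (by nlinarith) (by nlinarith)
  have htl : s * (1 - δ) < t :=
    (Real.lt_sqrt (by nlinarith)).mpr (by nlinarith)
  have htu : t < s * (1 + δ) :=
    (Real.sqrt_lt' (by positivity)).mpr (by nlinarith)
  have ht0 : 0 < t := by nlinarith
  have hts : |t - s| < δ * s := by
    rw [abs_lt]; constructor <;> nlinarith
  have hkey : |c * t - e * s| < δ * s * s + δ * s := by
    have h1 : |c * t - e * s| ≤ |c| * |t - s| + |c - e| * s := by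
      calc |c * t - e * s| = |c * (t - s) + (c - e) * s| := by ring_nf
        _ ≤ |c * (t - s)| + |(c - e) * s| := abs_add_le _ _
        _ = |c| * |t - s| + |c - e| * s := by
            rw [abs_mul, abs_mul, abs_of_pos hs0]
    have h2 : |c| * |t - s| < s * (δ * s) := by
      have h3 := abs_nonneg (t - s)
      have h4 := abs_nonneg c
      nlinarith
    nlinarith [hce, hs0]
  have hrw : |c / s - e / t| = |c * t - e * s| / (s * t) := by
    rw [div_sub_div _ _ (ne_of_gt hs0) (ne_of_gt ht0), abs_div,
      abs_of_pos (mul_pos hs0 ht0), mul_comm s e]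
  rw [hrw, div_lt_div_iff₀ (mul_pos hs0 ht0) (by linarith : (0:ℝ) < 1 - δ)]
  have e1 : |c * t - e * s| * (1 - δ) < (δ * s * s + δ * s) * (1 - δ) :=
    mul_lt_mul_of_pos_right hkey (by linarith)
  have e2 : (s + 1) * (1 - δ) ≤ 2 * t := by nlinarith
  nlinarith [e1, e2, mul_pos hδ0 hs0]
end

section
/- Define γ(n, s, z) = (exp(z/√(n − s − 3)) − 1)/(exp(z/√(n − s − 3)) + 1). Let c ∈ [0, 1], let q ≥ 0 and n be integers with n > q + 3, and set z_n = √(n − 3) · log((1 + c/3)/(1 − c/3)). Then γ(n, q, z_n) − γ(n, 0, z_n) ≤ (log(2)/2) · c · (√(n − 3)/√(n − q − 3) − 1). -/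
open Real Set

-- Step 1: 1 + (d-1) e^d ≥ 0 for d ≥ 0
lemma aux1 {d : ℝ} (hd : 0 ≤ d) : 0 ≤ 1 + (d - 1) * Real.exp d := by
  have hmono : MonotoneOn (fun x : ℝ => 1 + (x - 1) * Real.exp x) (Ici 0) := by
    apply monotoneOn_of_hasDerivWithinAt_nonneg (f' := fun x => x * Real.exp x)
      (convex_Ici 0)
    · fun_prop
    · intro x hx
      have h : HasDerivAt (fun x : ℝ => 1 + (x - 1) * Real.exp x)
          (x * Real.exp x) x := by
        have := (((hasDerivAt_id x).sub_const 1).mul (Real.hasDerivAt_exp x)).const_add 1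
        refine this.congr_deriv ?_; simp only [id_eq]; ring
      exact h.hasDerivWithinAt
    · intro x hx
      rw [interior_Ici] at hx
      exact mul_nonneg (le_of_lt hx) (Real.exp_pos x).le
  have := hmono (self_mem_Ici) (mem_Ici.2 hd) hd
  simpa using this

-- Step 2: 2(e^d - 1) ≤ d (1 + e^d) for d ≥ 0
lemma aux2 {d : ℝ} (hd : 0 ≤ d) : 2 * (Real.exp d - 1) ≤ d * (1 + Real.exp d) := by
  have hmono : MonotoneOn (fun x : ℝ => x + x * Real.exp x - 2 * Real.exp x + 2) (Ici 0) := by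
    apply monotoneOn_of_hasDerivWithinAt_nonneg
      (f' := fun x => 1 + (x - 1) * Real.exp x) (convex_Ici 0)
    · fun_prop
    · intro x hx
      have h : HasDerivAt (fun x : ℝ => x + x * Real.exp x - 2 * Real.exp x + 2)
          (1 + (x - 1) * Real.exp x) x := by
        have := ((((hasDerivAt_id x).add ((hasDerivAt_id x).mul (Real.hasDerivAt_exp x))).sub
          ((Real.hasDerivAt_exp x).const_mul 2)).add_const 2)
        refine this.congr_deriv ?_; simp only [id_eq]; ring
      exact h.hasDerivWithinAt
    · intro x hx
      rw [interior_Ici] at hx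
      exact aux1 (le_of_lt hx)
  have := hmono (self_mem_Ici) (mem_Ici.2 hd) hd
  simp only [Real.exp_zero] at this
  nlinarith [this]

-- Step 3: Lipschitz-type bound
lemma aux3 {a b : ℝ} (ha : 0 ≤ a) (hab : a ≤ b) :
    (Real.exp b - 1) / (Real.exp b + 1) - (Real.exp a - 1) / (Real.exp a + 1)
      ≤ (b - a) / 2 := by
  have hx1 : 1 ≤ Real.exp a := Real.one_le_exp ha
  have hxy : Real.exp a ≤ Real.exp b := Real.exp_le_exp.2 hab
  have key := aux2 (sub_nonneg.2 hab)
  have he : Real.exp (b - a) * Real.exp a = Real.exp b := by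
    rw [← Real.exp_add]; ring_nf
  have hxpos : (0:ℝ) < Real.exp a := Real.exp_pos a
  have h2 : 2 * (Real.exp b - Real.exp a) ≤ (b - a) * (Real.exp a + Real.exp b) := by
    nlinarith [mul_le_mul_of_nonneg_right key hxpos.le]
  set x := Real.exp a
  set y := Real.exp b
  have hxp : (0:ℝ) < x + 1 := by positivity
  have hyp : (0:ℝ) < y + 1 := by positivity
  rw [div_sub_div _ _ (ne_of_gt hyp) (ne_of_gt hxp), div_le_div_iff₀ (by positivity) two_pos]
  have hba : (0:ℝ) ≤ b - a := sub_nonneg.2 hab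
  have h3 : 2 * (x + y) ≤ (x + 1) * (y + 1) := by nlinarith
  nlinarith [h2, h3, mul_le_mul_of_nonneg_left h3 hba]


-- Step 4: log((3+c)/(3-c)) ≤ c log 2 for c ∈ [0,1], via concavity
lemma aux4 {c : ℝ} (hc0 : 0 ≤ c) (hc1 : c ≤ 1) :
    Real.log ((1 + c / 3) / (1 - c / 3)) ≤ c * Real.log 2 := by
  set φ : ℝ → ℝ := fun x => x * Real.log 2 - Real.log (3 + x) + Real.log (3 - x) with hφ
  have hd : ∀ x ∈ Icc (0:ℝ) 1, HasDerivAt φ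
      (Real.log 2 - (3 + x)⁻¹ - (3 - x)⁻¹) x := by
    intro x hx
    have h3p : (3:ℝ) + x ≠ 0 := by nlinarith [hx.1, hx.2]
    have h3m : (3:ℝ) - x ≠ 0 := by nlinarith [hx.1, hx.2]
    have h1 : HasDerivAt (fun y : ℝ => y * Real.log 2) (Real.log 2) x := by
      simpa using (hasDerivAt_id x).mul_const (Real.log 2)
    have h2 : HasDerivAt (fun y : ℝ => Real.log (3 + y)) (1 / (3 + x)) x := by
      simpa using (((hasDerivAt_id x).const_add 3).log h3p)
    have h3 : HasDerivAt (fun y : ℝ => Real.log (3 - y)) (-1 / (3 - x)) x := by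
      simpa using (((hasDerivAt_id x).const_sub 3).log h3m)
    have := (h1.sub h2).add h3
    refine this.congr_deriv ?_
    ring
  have hconc : ConcaveOn ℝ (Icc (0:ℝ) 1) φ := by
    apply concaveOn_of_hasDerivWithinAt2_nonpos (convex_Icc 0 1)
      (f' := fun x => Real.log 2 - (3 + x)⁻¹ - (3 - x)⁻¹)
      (f'' := fun x => (3 + x)⁻¹ ^ 2 - (3 - x)⁻¹ ^ 2)
    · exact fun x hx => ((hd x hx).continuousAt).continuousWithinAt
    · intro x hx
      rw [interior_Icc] at hx
      exact (hd x ⟨hx.1.le, hx.2.le⟩).hasDerivWithinAt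
    · intro x hx
      rw [interior_Icc] at hx
      have h3p : (3:ℝ) + x ≠ 0 := by nlinarith [hx.1, hx.2]
      have h3m : (3:ℝ) - x ≠ 0 := by nlinarith [hx.1, hx.2]
      have g1 := ((hasDerivAt_id x).const_add 3).inv h3p
      have g2 := ((hasDerivAt_id x).const_sub 3).inv h3m
      have := ((hasDerivAt_const x (Real.log 2)).sub g1).sub g2
      refine HasDerivAt.hasDerivWithinAt ?_
      convert this using 1
      · funext y; simp only [Pi.sub_apply, Pi.inv_apply, id]
      · simp only [id, inv_pow]; ring
    · intro x hx
      rw [interior_Icc] at hx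
      have h1 : (0:ℝ) < 3 - x := by nlinarith [hx.1, hx.2]
      have h2 : (3:ℝ) - x ≤ 3 + x := by nlinarith [hx.1]
      have hinv : (3 + x)⁻¹ ≤ (3 - x)⁻¹ := by
        apply inv_anti₀ h1 h2
      have h0 : (0:ℝ) < 3 + x := by linarith [hx.1]
      have hnn : (0:ℝ) ≤ (3 + x)⁻¹ := by positivity
      have := pow_le_pow_left₀ hnn hinv 2
      linarith
  have hmin := hconc.ge_on_segment (x := (0:ℝ)) (y := (1:ℝ))
    (left_mem_Icc.2 zero_le_one) (right_mem_Icc.2 zero_le_one)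
    (z := c) (by rw [segment_eq_Icc zero_le_one]; exact ⟨hc0, hc1⟩)
  have hφ0 : φ 0 = 0 := by simp [hφ]
  have hφ1 : φ 1 = 0 := by
    have : (4:ℝ) = 2 ^ 2 := by norm_num
    simp only [hφ]
    rw [show (3:ℝ) + 1 = 4 by norm_num, show (3:ℝ) - 1 = 2 by norm_num, this,
      Real.log_pow]
    push_cast
    ring
  rw [hφ0, hφ1, min_self] at hmin
  have harg : (1 + c / 3) / (1 - c / 3) = (3 + c) / (3 - c) := by
    have : (1:ℝ) - c / 3 ≠ 0 := by nlinarith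
    have : (3:ℝ) - c ≠ 0 := by nlinarith
    field_simp
  have h3p : (0:ℝ) < 3 + c := by linarith
  have h3m : (0:ℝ) < 3 - c := by linarith
  rw [harg, Real.log_div (ne_of_gt h3p) (ne_of_gt h3m)]
  simp only [hφ] at hmin
  linarith


/-- The threshold of the sample-size-adjusted test:
`γ(n, s, z) = (exp(z/√(n-s-3)) - 1)/(exp(z/√(n-s-3)) + 1)`. -/
noncomputable def gammaThresh (n s z : ℝ) : ℝ :=
  (Real.exp (z / Real.sqrt (n - s - 3)) - 1) /
    (Real.exp (z / Real.sqrt (n - s - 3)) + 1)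

/-- For `c ∈ [0,1]`, integers `q ≥ 0` and `n > q + 3`, and
`zₙ = √(n-3) · log((1 + c/3)/(1 - c/3))`, one has
`γ(n, q, zₙ) - γ(n, 0, zₙ) ≤ (log 2 / 2) · c · (√(n-3)/√(n-q-3) - 1)`. -/
theorem stmt12 (c : ℝ) (hc0 : 0 ≤ c) (hc1 : c ≤ 1) (q n : ℕ) (hn : q + 3 < n) :
    gammaThresh (n : ℝ) (q : ℝ)
        (Real.sqrt ((n : ℝ) - 3) * Real.log ((1 + c / 3) / (1 - c / 3))) -
      gammaThresh (n : ℝ) 0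
        (Real.sqrt ((n : ℝ) - 3) * Real.log ((1 + c / 3) / (1 - c / 3))) ≤
      Real.log 2 / 2 * c *
        (Real.sqrt ((n : ℝ) - 3) / Real.sqrt ((n : ℝ) - (q : ℝ) - 3) - 1) := by
  have hn' : (q : ℝ) + 3 < (n : ℝ) := by exact_mod_cast hn
  have hq0 : (0 : ℝ) ≤ (q : ℝ) := Nat.cast_nonneg q
  set a := Real.log ((1 + c / 3) / (1 - c / 3)) with ha_def
  have hden : (0 : ℝ) < 1 - c / 3 := by linarith
  have ha0 : 0 ≤ a := Real.log_nonneg (by rw [le_div_iff₀ hden]; linarith)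
  have hm : (0 : ℝ) < (n : ℝ) - 3 := by linarith
  have hr : (0 : ℝ) < (n : ℝ) - (q : ℝ) - 3 := by linarith
  have hsm : 0 < Real.sqrt ((n : ℝ) - 3) := Real.sqrt_pos.2 hm
  have hsr : 0 < Real.sqrt ((n : ℝ) - (q : ℝ) - 3) := Real.sqrt_pos.2 hr
  set t := Real.sqrt ((n : ℝ) - 3) / Real.sqrt ((n : ℝ) - (q : ℝ) - 3) with ht_def
  have ht1 : 1 ≤ t := (one_le_div hsr).2 (Real.sqrt_le_sqrt (by linarith))
  unfold gammaThresh
  have e0 : (n : ℝ) - 0 - 3 = (n : ℝ) - 3 := by ring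
  rw [e0]
  have hz0 : Real.sqrt ((n : ℝ) - 3) * a / Real.sqrt ((n : ℝ) - 3) = a := by
    rw [mul_comm, mul_div_assoc, div_self (ne_of_gt hsm), mul_one]
  have hzq : Real.sqrt ((n : ℝ) - 3) * a / Real.sqrt ((n : ℝ) - (q : ℝ) - 3) = t * a := by
    rw [ht_def]; ring
  rw [hz0, hzq]
  have hab : a ≤ t * a := by nlinarith
  have h1 := aux3 ha0 hab
  have h2 := aux4 hc0 hc1
  calc (Real.exp (t * a) - 1) / (Real.exp (t * a) + 1)
        - (Real.exp a - 1) / (Real.exp a + 1) ≤ (t * a - a) / 2 := h1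
    _ ≤ Real.log 2 / 2 * c * (t - 1) := by
        nlinarith [mul_le_mul_of_nonneg_right h2 (sub_nonneg.2 ht1)]
end
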